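/- Multiplicative shadow-freeness is impossible: for N ≥ 2 and L ≥ 2, there is no bijection h : ℤ/N^L ℤ → (ℤ/N ℤ)^L together with a binary operation g on ℤ/N ℤ such that h(a·b)_i = g(h(a)_i, h(b)_i) for all a, b ∈ ℤ/N^L ℤ and all coordinates i. -/

import Mathlib

/-- Auxiliary: `L * N ≤ N ^ L` for `2 ≤ N`, `2 ≤ L`. -/
lemma aux_mul_le_pow {N L : ℕ} (hN : 2 ≤ N) (hL : 2 ≤ L) : L * N ≤ N ^ L := by
  have h1 : L ≤ 2 ^ (L - 1) := by
    have := Nat.lt_two_pow_self (n := L - 1)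
    omega
  have h2 : (2:ℕ) ^ (L - 1) ≤ N ^ (L - 1) := Nat.pow_le_pow_left hN _
  calc L * N ≤ N ^ (L - 1) * N := Nat.mul_le_mul_right N (h1.trans h2)
    _ = N ^ L := by rw [← pow_succ]; congr 1; omega

/-- Auxiliary counting: the number of `a : ZMod M` whose value is divisible by `r`
(with `r ∣ M`, `r ≠ 0`) is `M / r`. -/
lemma aux_card_dvd_val (M r : ℕ) [NeZero M] (hr : r ∣ M) (hr0 : r ≠ 0) :
    Fintype.card {a : ZMod M // r ∣ a.val} = M / r := by
  have hM0 : M ≠ 0 := NeZero.ne M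
  have hlt : ∀ k : Fin (M / r), r * (k : ℕ) < M := by
    intro k
    have hk : (k : ℕ) < M / r := k.2
    calc r * (k : ℕ) < r * (M / r) := Nat.mul_lt_mul_of_pos_left hk (by omega)
      _ = M := Nat.mul_div_cancel' hr
  have e : {a : ZMod M // r ∣ a.val} ≃ Fin (M / r) := {
    toFun := fun a => ⟨a.1.val / r, Nat.div_lt_div_of_lt_of_dvd hr (ZMod.val_lt a.1)⟩
    invFun := fun k => ⟨((r * (k : ℕ) : ℕ) : ZMod M), by
      rw [ZMod.val_natCast_of_lt (hlt k)]
      exact Dvd.intro _ rfl⟩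
    left_inv := fun a => Subtype.ext (by
      show ((r * (a.1.val / r) : ℕ) : ZMod M) = a.1
      rw [Nat.mul_div_cancel' a.2, ZMod.natCast_rightInverse a.1])
    right_inv := fun k => Fin.ext (by
      show ((r * (k : ℕ) : ℕ) : ZMod M).val / r = (k : ℕ)
      rw [ZMod.val_natCast_of_lt (hlt k)]
      exact Nat.mul_div_cancel_left _ (by omega)) }
  rw [Fintype.card_congr e, Fintype.card_fin]

/-- Multiplicative shadow-freeness is impossible: for `N ≥ 2`, `L ≥ 2`, there is no
bijection `h : ℤ/N^Lℤ → (ℤ/Nℤ)^L` and binary operation `g` on `ℤ/Nℤ` such that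
`h(a·b)ᵢ = g(h(a)ᵢ, h(b)ᵢ)` for all `a, b` and all coordinates `i`. -/
theorem no_multiplicative_shadow_free (N L : ℕ) (hN : 2 ≤ N) (hL : 2 ≤ L) :
    ¬ ∃ (h : ZMod (N ^ L) ≃ (Fin L → ZMod N)) (g : ZMod N → ZMod N → ZMod N),
        ∀ (a b : ZMod (N ^ L)) (i : Fin L), h (a * b) i = g (h a i) (h b i) := by
  rintro ⟨e, g, hg⟩
  have hN0 : N ≠ 0 := by omega
  have hM0 : N ^ L ≠ 0 := pow_ne_zero _ hN0
  haveI : NeZero N := ⟨hN0⟩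
  haveI : NeZero (N ^ L) := ⟨hM0⟩
  have hM1 : 1 ≤ N ^ L := Nat.one_le_iff_ne_zero.mpr hM0
  -- the coordinates of e 0 are two-sided absorbing for g
  have habsL : ∀ (i : Fin L) (w : ZMod N), g (e 0 i) w = e 0 i := by
    intro i w
    have h1 := hg 0 (e.symm (fun _ => w)) i
    have h2 : e (e.symm (fun _ => w)) = fun _ => w := e.apply_symm_apply _
    rw [zero_mul, h2] at h1
    exact h1.symm
  have habsR : ∀ (i : Fin L) (w : ZMod N), g w (e 0 i) = e 0 i := by
    intro i w
    have h1 := hg (e.symm (fun _ => w)) 0 i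
    have h2 : e (e.symm (fun _ => w)) = fun _ => w := e.apply_symm_apply _
    rw [mul_zero, h2] at h1
    exact h1.symm
  have hzconst : ∀ i j : Fin L, e 0 i = e 0 j := by
    intro i j
    have h1 := habsL i (e 0 j)
    have h2 := habsR j (e 0 i)
    rw [← h1, h2]
  have hL0 : 0 < L := by omega
  set i0 : Fin L := ⟨0, hL0⟩ with hi0
  set z : ZMod N := e 0 i0 with hz
  -- transport of powers
  have hpow : ∀ (k : ℕ) (a : ZMod (N ^ L)) (i : Fin L),
      e (a ^ (k + 1)) i = (fun y => g y (e a i))^[k] (e a i) := by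
    intro k
    induction k with
    | zero => intro a i; simp
    | succ k ih =>
        intro a i
        rw [pow_succ, hg, ih, Function.iterate_succ_apply']
  set q : ZMod N → ZMod N := fun x => (fun y => g y x)^[N ^ L - 1] x with hqdef
  have hq : ∀ (a : ZMod (N ^ L)) (i : Fin L), e (a ^ (N ^ L)) i = q (e a i) := by
    intro a i
    have h1 := hpow (N ^ L - 1) a i
    rwa [Nat.sub_add_cancel hM1] at h1
  -- the radical of N
  set r : ℕ := ∏ p ∈ N.primeFactors, p with hrdef
  have hrdvdN : r ∣ N := Nat.prod_primeFactors_dvd N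
  have hrdvdM : r ∣ N ^ L := hrdvdN.trans (dvd_pow_self N (by omega))
  have hr0 : r ≠ 0 := by
    intro h0
    rw [h0] at hrdvdN
    exact hN0 (zero_dvd_iff.mp hrdvdN)
  -- key characterization : a ^ (N^L) = 0 ↔ r ∣ a.val
  have hkey : ∀ a : ZMod (N ^ L), a ^ (N ^ L) = 0 ↔ r ∣ a.val := by
    intro a
    have hcast : ((a.val ^ (N ^ L) : ℕ) : ZMod (N ^ L)) = a ^ (N ^ L) := by
      push_cast
      rw [ZMod.natCast_rightInverse a]
    rw [← hcast, ZMod.natCast_eq_zero_iff]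
    constructor
    · intro hdvd
      rcases Nat.eq_zero_or_pos a.val with h0 | hpos
      · simp [h0]
      refine Finset.prod_primes_dvd _ (fun p hp => (Nat.prime_of_mem_primeFactors hp).prime)
        (fun p hp => ?_)
      have hpp := Nat.prime_of_mem_primeFactors hp
      have hpN : p ∣ N := Nat.dvd_of_mem_primeFactors hp
      have h1 : p ∣ a.val ^ (N ^ L) :=
        dvd_trans (hpN.trans (dvd_pow_self N (by omega))) hdvd
      exact hpp.dvd_of_dvd_pow h1
    · intro hdvd
      rcases Nat.eq_zero_or_pos a.val with h0 | hpos
      · rw [h0, Nat.zero_pow (by omega)]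
        exact dvd_zero _
      have hav0 : a.val ≠ 0 := by omega
      have havM0 : a.val ^ (N ^ L) ≠ 0 := pow_ne_zero _ hav0
      rw [← Nat.factorization_le_iff_dvd hM0 havM0, Finsupp.le_def]
      intro p
      rw [Nat.factorization_pow, Nat.factorization_pow]
      simp only [Finsupp.smul_apply, smul_eq_mul]
      rcases Nat.eq_zero_or_pos (N.factorization p) with hf0 | hfpos
      · simp [hf0]
      have hpmem : p ∈ N.primeFactors := by
        rw [← Nat.support_factorization]
        exact Finsupp.mem_support_iff.mpr (by omega)
      have hpp : p.Prime := Nat.prime_of_mem_primeFactors hpmem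
      have hpr : p ∣ r := Finset.dvd_prod_of_mem _ hpmem
      have hpa : p ∣ a.val := hpr.trans hdvd
      have hfa : 1 ≤ a.val.factorization p :=
        Nat.Prime.factorization_pos_of_dvd hpp hav0 hpa
      have hfN : N.factorization p ≤ N := by
        have hdp : p ^ N.factorization p ∣ N := Nat.ordProj_dvd N p
        have h2 : N.factorization p < 2 ^ N.factorization p := Nat.lt_two_pow_self
        have h3 : (2:ℕ) ^ N.factorization p ≤ p ^ N.factorization p :=
          Nat.pow_le_pow_left hpp.two_le _
        have h4 : p ^ N.factorization p ≤ N := Nat.le_of_dvd (by omega) hdp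
        omega
      calc L * N.factorization p ≤ L * N := Nat.mul_le_mul_left L hfN
        _ ≤ N ^ L := aux_mul_le_pow hN hL
        _ = (N ^ L) * 1 := (mul_one _).symm
        _ ≤ (N ^ L) * a.val.factorization p := Nat.mul_le_mul_left _ hfa
  -- counting
  have hiff : ∀ a : ZMod (N ^ L), a ^ (N ^ L) = 0 ↔ ∀ i : Fin L, q (e a i) = z := by
    intro a
    constructor
    · intro ha i
      rw [← hq a i, ha, hz]
      exact hzconst i i0
    · intro ha
      apply e.injective
      funext i
      rw [hq a i, ha i, hz]
      exact (hzconst i i0).symm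
  have e1 : {a : ZMod (N ^ L) // a ^ (N ^ L) = 0} ≃ (Fin L → {x : ZMod N // q x = z}) :=
    (e.subtypeEquiv hiff).trans Equiv.subtypePiEquivPi
  have e2 : {a : ZMod (N ^ L) // a ^ (N ^ L) = 0} ≃ {a : ZMod (N ^ L) // r ∣ a.val} :=
    Equiv.subtypeEquiv (Equiv.refl _) (fun a => by simpa using hkey a)
  set t := Fintype.card {x : ZMod N // q x = z} with ht
  have hcard1 : Fintype.card {a : ZMod (N ^ L) // a ^ (N ^ L) = 0} = t ^ L := by
    rw [Fintype.card_congr e1, Fintype.card_fun, Fintype.card_fin]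
  have hcard2 : Fintype.card {a : ZMod (N ^ L) // a ^ (N ^ L) = 0} = N ^ L / r := by
    rw [Fintype.card_congr e2, aux_card_dvd_val (N ^ L) r hrdvdM hr0]
  have hmain : N ^ L / r = t ^ L := by rw [← hcard2, hcard1]
  -- contradiction via p-adic valuations
  set p : ℕ := N.minFac with hp
  have hpp : p.Prime := Nat.minFac_prime (by omega)
  have hpN : p ∣ N := Nat.minFac_dvd N
  have hpmem : p ∈ N.primeFactors := Nat.mem_primeFactors.mpr ⟨hpp, hpN, hN0⟩
  have hrfact : r.factorization p = 1 := by
    have hprod : r.factorization = ∑ q ∈ N.primeFactors, (q : ℕ).factorization := by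
      rw [hrdef]
      exact Nat.factorization_prod (fun q hq => (Nat.prime_of_mem_primeFactors hq).ne_zero)
    rw [hprod, Finset.sum_apply']
    have heach : ∀ q ∈ N.primeFactors, (q : ℕ).factorization p = if q = p then 1 else 0 := by
      intro q hq
      rw [(Nat.prime_of_mem_primeFactors hq).factorization, Finsupp.single_apply]
    rw [Finset.sum_congr rfl heach, Finset.sum_ite_eq' N.primeFactors p (fun _ => 1),
      if_pos hpmem]
  have hfNpos : 1 ≤ N.factorization p := Nat.Prime.factorization_pos_of_dvd hpp hN0 hpN
  have ht0 : t ≠ 0 := by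
    intro h0
    have : N ^ L / r = 0 := by rw [hmain, h0, Nat.zero_pow (by omega)]
    have hge : 1 ≤ N ^ L / r := Nat.one_le_div_iff (by omega) |>.mpr (Nat.le_of_dvd (by omega) hrdvdM)
    omega
  have hvals : (N ^ L / r).factorization p = (t ^ L).factorization p := by rw [hmain]
  rw [Nat.factorization_div hrdvdM] at hvals
  rw [Nat.factorization_pow, Nat.factorization_pow] at hvals
  simp only [Finsupp.tsub_apply, Finsupp.smul_apply, smul_eq_mul, hrfact] at hvals
  -- hvals : L * N.factorization p - 1 = L * t.factorization p
  set X := L * N.factorization p with hX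
  set Y := L * t.factorization p with hY
  have hXL : L ≤ X := Nat.le_mul_of_pos_right L (by omega)
  have hdX : L ∣ X := Dvd.intro _ rfl
  have hdY : L ∣ Y := Dvd.intro _ rfl
  have hXY : X = Y + 1 := by omega
  have hL1 : L ∣ 1 := by
    have h1 : L ∣ X - Y := Nat.dvd_sub hdX hdY
    rwa [hXY, Nat.add_sub_cancel_left] at h1
  have := Nat.dvd_one.mp hL1
  omega
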